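/- Let φ : ℚ^n → ℚ be a ℚ-concave function (i.e., for all rational convex combinations Σ a_i v_i with a_i ∈ ℚ_{≥0}, Σ a_i = 1, one has φ(Σ a_i v_i) ≥ Σ a_i φ(v_i)). Then for every point x̄ ∈ ℝ^n there exist positive real constants C and r such that |φ(x)| ≤ C for all x ∈ ℚ^n with |x − x̄| ≤ r. -/

import Mathlib

/-- `φ : ℚ^n → ℚ` is ℚ-concave if it satisfies the concavity inequality for all
rational convex combinations with rational coefficients. -/
def QConcave (n : ℕ) (φ : (Fin n → ℚ) → ℚ) : Prop :=
  ∀ (m : ℕ) (a : Fin m → ℚ) (v : Fin m → (Fin n → ℚ)),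
    (∀ i, 0 ≤ a i) → (∑ i, a i) = 1 →
      (∑ i, a i * φ (v i)) ≤ φ (∑ i, a i • v i)

/-- The embedding of `ℚ^n` into Euclidean space `ℝ^n`. -/
def ratEmb (n : ℕ) (x : Fin n → ℚ) : EuclideanSpace ℝ (Fin n) := WithLp.toLp 2 (fun i => (x i : ℝ))

/-- Concavity for an arbitrary finite index type. -/
lemma qconcave_fintype {n : ℕ} {φ : (Fin n → ℚ) → ℚ} (hφ : QConcave n φ)
    {ι : Type} [Fintype ι] (a : ι → ℚ) (v : ι → (Fin n → ℚ))
    (ha : ∀ i, 0 ≤ a i) (hs : ∑ i, a i = 1) :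
    (∑ i, a i * φ (v i)) ≤ φ (∑ i, a i • v i) := by
  classical
  let e := Fintype.equivFin ι
  have h := hφ (Fintype.card ι) (a ∘ e.symm) (v ∘ e.symm) (fun i => ha _)
    ((Equiv.sum_comp e.symm a).trans hs)
  have h1 : (∑ j, (a ∘ e.symm) j * φ ((v ∘ e.symm) j)) = ∑ i, a i * φ (v i) :=
    Equiv.sum_comp e.symm (fun i => a i * φ (v i))
  have h2 : (∑ j, (a ∘ e.symm) j • (v ∘ e.symm) j) = ∑ i, a i • v i :=
    Equiv.sum_comp e.symm (fun i => a i • v i)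
  rwa [h1, h2] at h

set_option maxHeartbeats 1000000 in
/-- Lower bound on a cube: `φ` is at least the minimum of its values at the vertices. -/
lemma qconcave_cube_lower {n : ℕ} {φ : (Fin n → ℚ) → ℚ} (hφ : QConcave n φ)
    (c : Fin n → ℚ) (R : ℚ) (hR : 0 < R) (x : Fin n → ℚ)
    (hx : ∀ i, |x i - c i| ≤ R) :
    (Finset.univ.inf' Finset.univ_nonempty
      (fun ε : Fin n → Bool => φ (fun i => c i + if ε i then R else -R))) ≤ φ x := by
  classical
  set vert : (Fin n → Bool) → (Fin n → ℚ) :=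
    fun ε => fun i => c i + if ε i then R else -R with hvert
  set m : ℚ := Finset.univ.inf' Finset.univ_nonempty (fun ε : Fin n → Bool => φ (vert ε))
    with hm
  have hRne : (2 * R) ≠ 0 := by positivity
  set w : Fin n → Bool → ℚ := fun i b =>
    if b then (R + (x i - c i)) / (2 * R) else (R - (x i - c i)) / (2 * R) with hw
  have hw0 : ∀ i b, 0 ≤ w i b := by
    intro i b
    have h1 := (abs_le.mp (hx i)).1
    have h2 := (abs_le.mp (hx i)).2
    cases b
    · have hb : w i false = (R - (x i - c i)) / (2 * R) := by simp [hw]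
      rw [hb]
      exact div_nonneg (by linarith) (by positivity)
    · have hb : w i true = (R + (x i - c i)) / (2 * R) := by simp [hw]
      rw [hb]
      exact div_nonneg (by linarith) (by positivity)
  have hwsum : ∀ i, w i true + w i false = 1 := by
    intro i
    have ht : w i true = (R + (x i - c i)) / (2 * R) := by simp [hw]
    have hf : w i false = (R - (x i - c i)) / (2 * R) := by simp [hw]
    rw [ht, hf, ← add_div, div_eq_one_iff_eq hRne]
    ring
  set a : (Fin n → Bool) → ℚ := fun ε => ∏ i, w i (ε i) with haa
  have ha0 : ∀ ε, 0 ≤ a ε := fun ε => Finset.prod_nonneg fun i _ => hw0 i (ε i)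
  have hasum : ∑ ε, a ε = 1 := by
    rw [haa, ← Fintype.prod_sum (fun i b => w i b)]
    simp only [Fintype.sum_bool, hwsum]
    exact Finset.prod_const_one
  have hxeq : (∑ ε, a ε • vert ε) = x := by
    funext j
    have key : ∀ ε : Fin n → Bool,
        a ε * (c j + if ε j then R else -R) =
          ∏ i, (w i (ε i) * if i = j then (c i + if ε i then R else -R) else 1) := by
      intro ε
      rw [Finset.prod_mul_distrib]
      congr 1
      rw [Finset.prod_ite_eq' Finset.univ j (fun i => c i + if ε i then R else -R)]
      simp
    have key2 : ∀ i, (∑ b, (w i b * if i = j then (c i + if b then R else -R) else 1)) =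
        if i = j then x i else 1 := by
      intro i
      by_cases hij : i = j
      · subst hij
        rw [if_pos rfl, Fintype.sum_bool]
        have ht : w i true = (R + (x i - c i)) / (2 * R) := by simp [hw]
        have hf : w i false = (R - (x i - c i)) / (2 * R) := by simp [hw]
        simp only [ht, hf]
        norm_num
        field_simp
        ring
      · rw [if_neg hij]
        simp only [if_neg hij, mul_one]
        rw [Fintype.sum_bool]
        exact hwsum i
    calc (∑ ε, a ε • vert ε) j
        = ∑ ε, a ε * (c j + if ε j then R else -R) := by
          simp [Finset.sum_apply, hvert]
      _ = ∑ ε : Fin n → Bool,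
            ∏ i, (w i (ε i) * if i = j then (c i + if ε i then R else -R) else 1) :=
          Finset.sum_congr rfl fun ε _ => key ε
      _ = ∏ i, ∑ b, (w i b * if i = j then (c i + if b then R else -R) else 1) :=
          (Fintype.prod_sum
            (fun i b => w i b * if i = j then (c i + if b then R else -R) else 1)).symm
      _ = ∏ i, (if i = j then x i else 1) :=
          Finset.prod_congr rfl fun i _ => key2 i
      _ = x j := by
          rw [Finset.prod_ite_eq' Finset.univ j (fun i => x i)]; simp
  have hconc := qconcave_fintype hφ a vert ha0 hasum
  rw [hxeq] at hconc
  refine le_trans ?_ hconc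
  calc m = (∑ ε, a ε) * m := by rw [hasum, one_mul]
    _ = ∑ ε, a ε * m := by rw [Finset.sum_mul]
    _ ≤ ∑ ε, a ε * φ (vert ε) := by
        refine Finset.sum_le_sum fun ε _ => ?_
        exact mul_le_mul_of_nonneg_left
          (Finset.inf'_le _ (Finset.mem_univ ε)) (ha0 ε)

lemma euclidean_coord_le_norm {n : ℕ} (v : EuclideanSpace ℝ (Fin n)) (i : Fin n) :
    |v i| ≤ ‖v‖ := by
  rw [EuclideanSpace.norm_eq]
  have h : |v i| = Real.sqrt (‖v i‖ ^ 2) := by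
    rw [Real.norm_eq_abs, Real.sqrt_sq_eq_abs, abs_abs]
  rw [h]
  exact Real.sqrt_le_sqrt (Finset.single_le_sum (f := fun j => ‖v j‖ ^ 2)
    (fun j _ => by positivity) (Finset.mem_univ i))

theorem qconcave_locally_bounded (n : ℕ) (φ : (Fin n → ℚ) → ℚ) (hφ : QConcave n φ)
    (xbar : EuclideanSpace ℝ (Fin n)) :
    ∃ C r : ℝ, 0 < C ∧ 0 < r ∧
      ∀ x : Fin n → ℚ, ‖ratEmb n x - xbar‖ ≤ r → |(φ x : ℝ)| ≤ C := by
  classical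
  -- choose a rational point near xbar (coordinatewise)
  have hc : ∀ i, ∃ q : ℚ, |(q : ℝ) - xbar i| ≤ 1 := by
    intro i
    obtain ⟨q, hq1, hq2⟩ := exists_rat_btwn (show xbar i < xbar i + 1 by linarith)
    exact ⟨q, abs_le.mpr ⟨by linarith, by linarith⟩⟩
  choose c hc using hc
  set m : ℚ := Finset.univ.inf' Finset.univ_nonempty
    (fun ε : Fin n → Bool => φ (fun i => c i + if ε i then (4 : ℚ) else -(4 : ℚ))) with hm
  refine ⟨2 * |((φ c : ℚ) : ℝ)| + 2 * |((m : ℚ) : ℝ)| + 1, 1, by positivity, one_pos, ?_⟩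
  intro x hxr
  -- coordinatewise bound
  have hcoord : ∀ i, |x i - c i| ≤ 2 := by
    intro i
    have h1 : |(x i : ℝ) - xbar i| ≤ 1 := by
      have := euclidean_coord_le_norm (ratEmb n x - xbar) i
      have heq : (ratEmb n x - xbar) i = (x i : ℝ) - xbar i := rfl
      rw [heq] at this
      exact this.trans hxr
    have h2 : |(x i : ℝ) - (c i : ℝ)| ≤ 2 := by
      have h4 := abs_sub_le ((x i : ℝ)) (xbar i) ((c i : ℝ))
      have h3 : |xbar i - (c i : ℝ)| ≤ 1 := by
        rw [abs_sub_comm]; exact hc i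
      linarith
    have : ((|x i - c i| : ℚ) : ℝ) ≤ ((2 : ℚ) : ℝ) := by push_cast; exact h2
    exact_mod_cast this
  -- lower bound
  have hlow : m ≤ φ x :=
    qconcave_cube_lower hφ c 4 (by norm_num) x
      (fun i => (hcoord i).trans (by norm_num))
  -- the reflected point
  have hylow : m ≤ φ (fun i => 2 * c i - x i) := by
    refine qconcave_cube_lower hφ c 4 (by norm_num) _ fun i => ?_
    show |2 * c i - x i - c i| ≤ 4
    have h : 2 * c i - x i - c i = -(x i - c i) := by ring
    rw [h, abs_neg]
    exact (hcoord i).trans (by norm_num)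
  -- binary concavity at the midpoint c
  have hmid : (1 / 2 : ℚ) * φ x + (1 / 2 : ℚ) * φ (fun i => 2 * c i - x i) ≤ φ c := by
    have h := qconcave_fintype hφ (ι := Bool) (fun _ => (1 / 2 : ℚ))
      (fun b => if b then x else (fun i => 2 * c i - x i)) (fun _ => by norm_num)
      (by rw [Fintype.sum_bool]; norm_num)
    norm_num at h
    have hsum : ((1 / 2 : ℚ) • x + (1 / 2 : ℚ) • fun i => 2 * c i - x i) = c := by
      funext i
      simp only [Pi.add_apply, Pi.smul_apply, smul_eq_mul]
      ring
    rwa [hsum] at h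
  have hup : φ x ≤ 2 * φ c - m := by linarith
  -- combine
  have hq : |φ x| ≤ 2 * |φ c| + 2 * |m| + 1 := by
    have a1 := abs_nonneg (φ c)
    have a2 := abs_nonneg m
    have a3 := neg_abs_le m
    have a4 := neg_abs_le (φ c)
    have a5 := le_abs_self (φ c)
    have a6 := le_abs_self m
    rw [abs_le]
    constructor <;> linarith
  have hfin : ((|φ x| : ℚ) : ℝ) ≤ ((2 * |φ c| + 2 * |m| + 1 : ℚ) : ℝ) := by exact_mod_cast hq
  push_cast at hfin
  linarith [hfin]
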